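/- Let A be a unital complex Banach algebra with ‖1‖ = 1 and let a ∈ A be dissipative. Then the numerical range of a, and hence the spectrum of a, is contained in the half-plane {z : Re z ≤ 0}; in particular 1 − a is invertible and ‖(1−a)⁻¹‖ ≤ 1. -/

import Mathlib

/-- A state on a unital Banach algebra: a continuous linear functional `ρ`
with `‖ρ‖ = 1` and `ρ 1 = 1`. -/
def IsState {A : Type*} [NormedRing A] [NormedAlgebra ℂ A] (ρ : A →L[ℂ] ℂ) : Prop :=
  ‖ρ‖ = 1 ∧ ρ 1 = 1

/-- An element is dissipative if `Re ρ(a) ≤ 0` for all states `ρ`. -/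
def IsDissipative {A : Type*} [NormedRing A] [NormedAlgebra ℂ A] (a : A) : Prop :=
  ∀ ρ : A →L[ℂ] ℂ, IsState ρ → (ρ a).re ≤ 0

section Aux

variable {A : Type*} [NormedRing A] [NormedAlgebra ℂ A] [NormOneClass A] [CompleteSpace A]

/-- If `a` is dissipative then `1 - a` expands norms under left multiplication. -/
lemma dissipative_norm_le (a : A) (ha : IsDissipative a) (x : A) :
    ‖x‖ ≤ ‖(1 - a) * x‖ := by
  rcases eq_or_ne x 0 with rfl | hx
  · simp
  obtain ⟨φ, hφ1, hφx⟩ := exists_dual_vector ℂ x (norm_pos_iff.mpr hx).ne'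
  have hxpos : (0 : ℝ) < ‖x‖ := norm_pos_iff.mpr hx
  -- the state ρ c = φ (c * x) / ‖x‖
  set L : A →ₗ[ℂ] ℂ := ‖x‖⁻¹ • (φ.toLinearMap ∘ₗ LinearMap.mulRight ℂ x) with hL
  have hLbound : ∀ c : A, ‖L c‖ ≤ 1 * ‖c‖ := by
    intro c
    have : ‖φ (c * x)‖ ≤ ‖c‖ * ‖x‖ := by
      calc ‖φ (c * x)‖ ≤ ‖φ‖ * ‖c * x‖ := φ.le_opNorm _
        _ ≤ 1 * (‖c‖ * ‖x‖) := by
            rw [hφ1]; exact mul_le_mul_of_nonneg_left (norm_mul_le c x) zero_le_one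
        _ = ‖c‖ * ‖x‖ := one_mul _
    have hLc : L c = ‖x‖⁻¹ • φ (c * x) := rfl
    rw [hLc, norm_smul, norm_inv, norm_norm, one_mul]
    rw [inv_mul_le_iff₀ hxpos, mul_comm]
    exact this
  set ρ : A →L[ℂ] ℂ := LinearMap.mkContinuous L 1 hLbound with hρ
  have hρ1 : ρ 1 = 1 := by
    have : ρ 1 = ‖x‖⁻¹ • φ (1 * x) := rfl
    have hφx' : φ x = Complex.ofReal ‖x‖ := hφx
    rw [this, one_mul, hφx', Complex.real_smul, ← Complex.ofReal_mul,
      inv_mul_cancel₀ (ne_of_gt hxpos), Complex.ofReal_one]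
  have hρnorm : ‖ρ‖ = 1 := by
    refine le_antisymm (LinearMap.mkContinuous_norm_le _ zero_le_one _) ?_
    have := ρ.le_opNorm 1
    rw [hρ1, norm_one, norm_one, mul_one] at this
    exact this
  have hstate : IsState ρ := ⟨hρnorm, hρ1⟩
  have hre : (ρ a).re ≤ 0 := ha ρ hstate
  -- φ (a * x) = ‖x‖ • ρ a
  have hφax : φ (a * x) = (‖x‖ : ℂ) * ρ a := by
    have : ρ a = ‖x‖⁻¹ • φ (a * x) := rfl
    rw [this, Complex.real_smul, ← mul_assoc, ← Complex.ofReal_mul,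
      mul_inv_cancel₀ (ne_of_gt hxpos), Complex.ofReal_one, one_mul]
  calc ‖x‖ = ‖x‖ - ‖x‖ * (ρ a).re + ‖x‖ * (ρ a).re := by ring
    _ ≤ ‖x‖ - ‖x‖ * (ρ a).re := by
        nlinarith [mul_nonpos_of_nonneg_of_nonpos (le_of_lt hxpos) hre]
    _ = (φ ((1 - a) * x)).re := by
        rw [sub_mul, one_mul, map_sub, Complex.sub_re, hφax, Complex.mul_re]
        simp [Complex.ofReal_re, Complex.ofReal_im, hφx]
    _ ≤ ‖φ ((1 - a) * x)‖ := Complex.re_le_norm _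
    _ ≤ ‖φ‖ * ‖(1 - a) * x‖ := φ.le_opNorm _
    _ = ‖(1 - a) * x‖ := by rw [hφ1, one_mul]

/-- If every element of a submodule `M` is at distance ≥ 1 from `1`, there is a state
vanishing on `M`. -/
lemma exists_state_vanishing (M : Submodule ℂ A) (hM : ∀ m ∈ M, 1 ≤ ‖1 - m‖) :
    ∃ ρ : A →L[ℂ] ℂ, IsState ρ ∧ ∀ m ∈ M, ρ m = 0 := by
  set S := M.topologicalClosure with hS
  haveI : IsClosed (S : Set A) := M.isClosed_topologicalClosure
  have hSdist : ∀ s ∈ S, 1 ≤ ‖1 - s‖ := by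
    intro s hs
    have hclosed : IsClosed {y : A | 1 ≤ ‖1 - y‖} :=
      isClosed_le continuous_const ((continuous_const.sub continuous_id).norm)
    have hsub : (M : Set A) ⊆ {y : A | 1 ≤ ‖1 - y‖} := fun y hy => hM y hy
    have : (S : Set A) ⊆ {y : A | 1 ≤ ‖1 - y‖} := by
      rw [hS, Submodule.topologicalClosure_coe]
      exact closure_minimal hsub hclosed
    exact this hs
  -- norm of the class of 1 in the quotient is 1
  have hmk_le : ∀ y : A, ‖(Submodule.Quotient.mk y : A ⧸ S)‖ ≤ ‖y‖ :=
    fun y => Submodule.Quotient.norm_mk_le S y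
  have hmk1 : ‖(Submodule.Quotient.mk 1 : A ⧸ S)‖ = 1 := by
    refine le_antisymm (by simpa using hmk_le 1) ?_
    by_contra h
    push_neg at h
    obtain ⟨m, hm, hmlt⟩ := Submodule.Quotient.norm_mk_lt
      (Submodule.Quotient.mk 1 : A ⧸ S) (sub_pos.mpr h)
    have hsmem : (1 : A) - m ∈ S := by
      have h' : m - 1 ∈ S := (Submodule.Quotient.eq S).mp hm
      simpa using S.neg_mem h'
    have := hSdist _ hsmem
    simp only [sub_sub_cancel] at this
    linarith
  have hmk1ne : (Submodule.Quotient.mk 1 : A ⧸ S) ≠ 0 := by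
    intro h; rw [h, norm_zero] at hmk1; linarith
  obtain ⟨g, hg1, hgval⟩ := exists_dual_vector ℂ (Submodule.Quotient.mk 1 : A ⧸ S) (by rw [hmk1]; norm_num)
  -- the quotient map as a continuous linear map
  set q : A →L[ℂ] A ⧸ S := LinearMap.mkContinuous S.mkQ 1
    (fun y => by simpa using hmk_le y) with hq
  set ρ : A →L[ℂ] ℂ := g.comp q with hρ
  have hρapp : ∀ y : A, ρ y = g (Submodule.Quotient.mk y) := fun y => rfl
  have hρ1 : ρ 1 = 1 := by rw [hρapp, hgval, hmk1]; norm_num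
  have hρnorm : ‖ρ‖ = 1 := by
    refine le_antisymm ?_ ?_
    · refine ρ.opNorm_le_bound zero_le_one fun y => ?_
      rw [hρapp]
      calc ‖g (Submodule.Quotient.mk y)‖ ≤ ‖g‖ * ‖(Submodule.Quotient.mk y : A ⧸ S)‖ :=
            g.le_opNorm _
        _ ≤ 1 * ‖y‖ := by rw [hg1]; exact mul_le_mul_of_nonneg_left (hmk_le y) zero_le_one
    · have := ρ.le_opNorm 1
      rw [hρ1, norm_one, norm_one, mul_one] at this
      exact this
  refine ⟨ρ, ⟨hρnorm, hρ1⟩, fun m hm => ?_⟩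
  have : (Submodule.Quotient.mk m : A ⧸ S) = 0 :=
    (Submodule.Quotient.mk_eq_zero S).mpr (M.le_topologicalClosure hm)
  rw [hρapp, this, map_zero]

/-- Every non-invertible element is annihilated by some state. -/
lemma exists_state_eq_zero (b : A) (hb : ¬ IsUnit b) :
    ∃ ρ : A →L[ℂ] ℂ, IsState ρ ∧ ρ b = 0 := by
  by_cases hR : ∃ c : A, ‖1 - b * c‖ < 1
  · -- then b is right invertible; it cannot also be left invertible
    have hL : ¬ ∃ d : A, ‖1 - d * b‖ < 1 := by
      rintro ⟨d, hd⟩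
      obtain ⟨c, hc⟩ := hR
      have hbc : IsUnit (b * c) := by
        have := (Units.oneSub (1 - b * c) hc).isUnit
        rwa [Units.val_oneSub, sub_sub_cancel] at this
      have hdb : IsUnit (d * b) := by
        have := (Units.oneSub (1 - d * b) hd).isUnit
        rwa [Units.val_oneSub, sub_sub_cancel] at this
      obtain ⟨u, hu⟩ := hbc
      obtain ⟨v, hv⟩ := hdb
      -- b has right inverse r and left inverse l, hence is a unit
      set r : A := c * ↑u⁻¹ with hr
      set l : A := ↑v⁻¹ * d with hl
      have hbr : b * r = 1 := by
        rw [hr, ← mul_assoc, ← hu]; exact u.mul_inv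
      have hlb : l * b = 1 := by
        rw [hl, mul_assoc, ← hv]; exact v.inv_mul
      have hrl : r = l := by
        calc r = 1 * r := (one_mul r).symm
          _ = (l * b) * r := by rw [hlb]
          _ = l * (b * r) := by rw [mul_assoc]
          _ = l := by rw [hbr, mul_one]
      exact hb ⟨⟨b, r, hbr, by rw [hrl, hlb]⟩, rfl⟩
    push_neg at hL
    -- use the left ideal A·b
    obtain ⟨ρ, hρ, hρM⟩ := exists_state_vanishing (LinearMap.range (LinearMap.mulRight ℂ b))
      (by rintro m ⟨d, rfl⟩; exact hL d)
    exact ⟨ρ, hρ, by simpa using hρM b ⟨1, one_mul b⟩⟩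
  · push_neg at hR
    -- use the right ideal b·A
    obtain ⟨ρ, hρ, hρM⟩ := exists_state_vanishing (LinearMap.range (LinearMap.mulLeft ℂ b))
      (by rintro m ⟨c, rfl⟩; exact hR c)
    exact ⟨ρ, hρ, by simpa using hρM b ⟨1, mul_one b⟩⟩

end Aux

theorem stmt2 {A : Type*} [NormedRing A] [NormedAlgebra ℂ A] [NormOneClass A]
    [CompleteSpace A] (a : A) (ha : IsDissipative a) :
    (∀ ρ : A →L[ℂ] ℂ, IsState ρ → (ρ a).re ≤ 0) ∧
    (∀ z ∈ spectrum ℂ a, z.re ≤ 0) ∧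
    IsUnit (1 - a) ∧ ‖Ring.inverse (1 - a)‖ ≤ 1 := by
  have hspec : ∀ z ∈ spectrum ℂ a, z.re ≤ 0 := by
    intro z hz
    rw [spectrum.mem_iff] at hz
    obtain ⟨ρ, hρ, hρb⟩ := exists_state_eq_zero _ hz
    have hρa : ρ a = z := by
      have h1 : ρ (algebraMap ℂ A z - a) = 0 := hρb
      rw [map_sub, sub_eq_zero] at h1
      rw [← h1, Algebra.algebraMap_eq_smul_one, map_smul, hρ.2, smul_eq_mul, mul_one]
    rw [← hρa] at *
    exact ha ρ hρ
  have hunit : IsUnit (1 - a) := by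
    by_contra h
    have h1 : (1 : ℂ) ∈ spectrum ℂ a := by
      rw [spectrum.mem_iff, map_one]
      exact h
    have := hspec 1 h1
    norm_num at this
  refine ⟨ha, hspec, hunit, ?_⟩
  have hmul : (1 - a) * Ring.inverse (1 - a) = 1 := Ring.mul_inverse_cancel _ hunit
  have := dissipative_norm_le a ha (Ring.inverse (1 - a))
  rwa [hmul, norm_one] at this
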